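/- Let K be a convex body in R^d and x ∈ ∂K a point where ∂K is twice differentiable in the generalized sense. With K_T (the point where vol_d((-y+K)∩(y-K)) is maximal) at the origin and x_t = ∂K_t ∩ [0,x], one has lim_{t→0} ⟨x, N(x)⟩ / ⟨x_t, N(x_t)⟩ = 1. -/

import Mathlib

open MeasureTheory

/-- `v` is a subgradient of `f` at `x`. -/
def SubgradAt {m : ℕ} (f : EuclideanSpace ℝ (Fin m) → ℝ) (x v : EuclideanSpace ℝ (Fin m)) :
    Prop :=
  ∀ y, f x + (inner ℝ v (y - x) : ℝ) ≤ f y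

/-- `f` (with `f 0 = 0` and `0` a subgradient at `0`) is twice differentiable in the
generalized sense at `0` with generalized second differential `A`. -/
def HasGenSecondDerivAtZero {m : ℕ} (f : EuclideanSpace ℝ (Fin m) → ℝ)
    (A : EuclideanSpace ℝ (Fin m) →L[ℝ] EuclideanSpace ℝ (Fin m)) : Prop :=
  ∃ Θ : ℝ → ℝ, Monotone Θ ∧ Θ 0 = 0 ∧
    Filter.Tendsto Θ (nhdsWithin 0 (Set.Ioi 0)) (nhds 0) ∧
    ∃ U ∈ nhds (0 : EuclideanSpace ℝ (Fin m)),
      ∀ x ∈ U, ∀ v, SubgradAt f x v → ‖v - A x‖ ≤ Θ ‖x‖ * ‖x‖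

private lemma sum_split {d : ℕ} (hd : 1 < d) (F : Fin d → ℝ) :
    ∑ j, F j = (∑ i : Fin (d-1), F ⟨i, by omega⟩) + F ⟨d-1, by omega⟩ := by
  obtain ⟨m, rfl⟩ : ∃ m, d = m + 1 := ⟨d - 1, by omega⟩
  exact Fin.sum_univ_castSucc F

private lemma exists_subgrad {m : ℕ} {f : EuclideanSpace ℝ (Fin m) → ℝ}
    (hf : ConvexOn ℝ Set.univ f) (u : EuclideanSpace ℝ (Fin m)) :
    ∃ v, SubgradAt f u v := by
  have hcont : Continuous f := by
    rw [← continuousOn_univ]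
    simpa using hf.continuousOn isOpen_univ
  set S : Set (EuclideanSpace ℝ (Fin m) × ℝ) := {p | f p.1 < p.2} with hS
  have hSconv : Convex ℝ S := by
    rintro ⟨p, r⟩ hp ⟨q, s⟩ hq a b ha hb hab
    simp only [hS, Set.mem_setOf_eq] at hp hq ⊢
    calc f (a • p + b • q) ≤ a * f p + b * f q :=
          hf.2 (Set.mem_univ p) (Set.mem_univ q) ha hb hab
    _ < a * r + b * s := by
        rcases ha.eq_or_lt with rfl | ha'
        · simp only [zero_mul, zero_add]
          have : b = 1 := by linarith
          subst this; simpa using hq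
        · rcases hb.eq_or_lt with rfl | hb'
          · have : a = 1 := by linarith
            subst this; simp only [mul_zero, add_zero, one_mul]; simpa using hp
          · exact add_lt_add (by nlinarith) (by nlinarith)
  have hSopen : IsOpen S := by
    have : S = (fun p : EuclideanSpace ℝ (Fin m) × ℝ => p.2 - f p.1) ⁻¹' Set.Ioi 0 := by
      ext p; simp [hS, sub_pos]
    rw [this]
    exact (continuous_snd.sub (hcont.comp continuous_fst)).isOpen_preimage _ isOpen_Ioi
  have hnot : (u, f u) ∉ S := by simp [hS]
  obtain ⟨ℓ, hℓ⟩ := geometric_hahn_banach_open_point hSconv hSopen hnot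
  set c : ℝ := ℓ (0, 1) with hc
  have hdec : ∀ w r, ℓ (w, r) = ℓ (w, 0) + r * c := by
    intro w r
    have : (w, r) = (w, (0:ℝ)) + r • ((0:EuclideanSpace ℝ (Fin m)), (1:ℝ)) := by
      simp [Prod.ext_iff]
    rw [this, map_add, ℓ.map_smul]
    simp [hc, smul_eq_mul]
  have hcneg : c < 0 := by
    have h1 : ℓ (u, f u + 1) < ℓ (u, f u) := hℓ _ (by simp [hS])
    rw [hdec u (f u + 1), hdec u (f u)] at h1
    linarith
  have hkey : ∀ w, ℓ (w, 0) + f w * c ≤ ℓ (u, 0) + f u * c := by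
    intro w
    by_contra hcon
    push_neg at hcon
    -- for small ε, (w, f w + ε) ∈ S gives contradiction
    set δ := (ℓ (w, 0) + f w * c) - (ℓ (u, 0) + f u * c) with hδ
    have hδpos : 0 < δ := by simp [hδ]; linarith
    have hc' : (0:ℝ) < -c := by linarith
    have hε : (0:ℝ) < δ / (-c) / 2 := by positivity
    have hmem : (w, f w + δ / (-c) / 2) ∈ S := by simp [hS]; linarith
    have := hℓ _ hmem
    rw [hdec w _, hdec u _] at this
    have hcc : c / -c = -1 := by rw [div_neg, div_self (ne_of_lt hcneg)]
    have h2 : (δ / (-c) / 2) * c = -(δ/2) := by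
      calc δ / -c / 2 * c = δ * (c / -c) / 2 := by ring
        _ = -(δ/2) := by rw [hcc]; ring
    nlinarith [this, h2]
  set ℓ₁ : EuclideanSpace ℝ (Fin m) →L[ℝ] ℝ :=
    ℓ.comp (ContinuousLinearMap.inl ℝ _ ℝ) with hℓ₁
  refine ⟨(-c)⁻¹ • (InnerProductSpace.toDual ℝ _).symm ℓ₁, fun y => ?_⟩
  have hinner : (inner ℝ ((-c)⁻¹ • (InnerProductSpace.toDual ℝ _).symm ℓ₁) (y - u) : ℝ)
      = (-c)⁻¹ * (ℓ (y - u, 0)) := by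
    rw [real_inner_smul_left]
    congr 1
    exact InnerProductSpace.toDual_symm_apply
  rw [hinner]
  have hky := hkey y
  have hlin : ℓ (y - u, 0) = ℓ (y, 0) - ℓ (u, 0) := by
    have : ((y - u, (0:ℝ)) : EuclideanSpace ℝ (Fin m) × ℝ) = (y, 0) - (u, 0) := by
      simp [Prod.ext_iff]
    rw [this, map_sub]
  rw [hlin]
  have hc' : (0:ℝ) < -c := by linarith
  have h3 : ℓ (y,0) - ℓ (u,0) ≤ (-c) * (f y - f u) := by nlinarith [hky]
  have h4 := mul_le_mul_of_nonneg_left h3 (le_of_lt (inv_pos.mpr hc'))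
  rw [inv_mul_cancel_left₀ (ne_of_gt hc')] at h4
  linarith

/-- quadratic upper bound on `f` near `0` -/
private lemma f_quad_bound {m : ℕ} {f : EuclideanSpace ℝ (Fin m) → ℝ}
    (hf : ConvexOn ℝ Set.univ f) (hf0 : f 0 = 0)
    {A : EuclideanSpace ℝ (Fin m) →L[ℝ] EuclideanSpace ℝ (Fin m)}
    (hA : HasGenSecondDerivAtZero f A) :
    ∃ ρ > 0, ∃ Cb ≥ 0, ∀ u : EuclideanSpace ℝ (Fin m), ‖u‖ < ρ → f u ≤ Cb * ‖u‖^2 := by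
  obtain ⟨Θ, hΘmono, hΘ0, -, UA, hUA, hsub⟩ := hA
  obtain ⟨ρ, hρ, hball⟩ := Metric.mem_nhds_iff.1 hUA
  have hΘρ : 0 ≤ Θ ρ := by rw [← hΘ0]; exact hΘmono hρ.le
  refine ⟨ρ, hρ, ‖A‖ + Θ ρ, by positivity, fun u hu => ?_⟩
  obtain ⟨v, hv⟩ := exists_subgrad hf u
  have huU : u ∈ UA := hball (by rw [Metric.mem_ball, dist_zero_right]; exact hu)
  have hvb := hsub u huU v hv
  have hfu : f u ≤ inner ℝ v u := by
    have h1 := hv 0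
    rw [hf0, zero_sub, inner_neg_right] at h1
    linarith
  have hΘu : Θ ‖u‖ ≤ Θ ρ := hΘmono hu.le
  have hnv : ‖v‖ ≤ ‖A‖ * ‖u‖ + Θ ρ * ‖u‖ := by
    calc ‖v‖ = ‖A u + (v - A u)‖ := by rw [add_sub_cancel]
      _ ≤ ‖A u‖ + ‖v - A u‖ := norm_add_le _ _
      _ ≤ ‖A‖ * ‖u‖ + Θ ‖u‖ * ‖u‖ := add_le_add (A.le_opNorm u) hvb
      _ ≤ ‖A‖ * ‖u‖ + Θ ρ * ‖u‖ := by
          have := norm_nonneg u; nlinarith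
  calc f u ≤ inner ℝ v u := hfu
    _ ≤ ‖v‖ * ‖u‖ := real_inner_le_norm v u
    _ ≤ (‖A‖ * ‖u‖ + Θ ρ * ‖u‖) * ‖u‖ := by
        have := norm_nonneg u
        exact mul_le_mul_of_nonneg_right hnv this
    _ = (‖A‖ + Θ ρ) * ‖u‖^2 := by ring

set_option maxHeartbeats 2000000 in
private lemma origin_int {d : ℕ} (hd : 2 ≤ d) (K : Set (EuclideanSpace ℝ (Fin d)))
    (hK : IsCompact K) (hKc : Convex ℝ K) (hKi : (interior K).Nonempty)
    (C : EuclideanSpace ℝ (Fin d) → Set (EuclideanSpace ℝ (Fin d)))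
    (hC : ∀ y, C y = {z : EuclideanSpace ℝ (Fin d) | y + z ∈ K ∧ y - z ∈ K})
    (T : ℝ) (hT : IsGreatest ((fun y => (volume (C y)).toReal) '' K) T)
    (hw : {y ∈ K | (volume (C y)).toReal = T} = {0}) :
    0 < T ∧ 0 ∈ interior K := by
  -- C y contains a ball when a ball around y is inside K
  have hCball : ∀ (y : EuclideanSpace ℝ (Fin d)) (ε : ℝ), Metric.ball y ε ⊆ K →
      Metric.ball (0 : EuclideanSpace ℝ (Fin d)) ε ⊆ C y := by
    intro y ε hb z hz
    rw [hC]
    simp only [Metric.mem_ball, dist_zero_right] at hz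
    constructor
    · apply hb; rw [Metric.mem_ball, dist_eq_norm]; simpa using hz
    · apply hb; rw [Metric.mem_ball, dist_eq_norm]; simpa [norm_sub_rev] using hz
  have hCfin : ∀ y : EuclideanSpace ℝ (Fin d), volume (C y) < ⊤ := by
    intro y
    have hsub : C y ⊆ (fun z => y + z) ⁻¹' K := by
      intro z hz; rw [hC] at hz; exact hz.1
    calc volume (C y) ≤ volume ((fun z => y + z) ⁻¹' K) := measure_mono hsub
      _ = volume K := measure_preimage_add volume y K
      _ < ⊤ := hK.measure_lt_top
  -- T is positive
  obtain ⟨p, hp⟩ := hKi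
  obtain ⟨εp, hεp, hbp⟩ := Metric.isOpen_iff.1 isOpen_interior p hp
  have hballp : Metric.ball p εp ⊆ K := hbp.trans interior_subset
  have hT0 : 0 < T := by
    have hmem : (volume (C p)).toReal ∈ (fun y => (volume (C y)).toReal) '' K :=
      ⟨p, interior_subset hp, rfl⟩
    have h1 : 0 < volume (C p) :=
      lt_of_lt_of_le (Metric.measure_ball_pos volume (0:EuclideanSpace ℝ (Fin d)) hεp)
        (measure_mono (hCball p εp hballp))
    have h2 : 0 < (volume (C p)).toReal := ENNReal.toReal_pos h1.ne' (hCfin p).ne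
    exact lt_of_lt_of_le h2 (hT.2 hmem)
  refine ⟨hT0, ?_⟩
  -- 0 is in K and achieves the max
  have h0mem : (0 : EuclideanSpace ℝ (Fin d)) ∈ {y ∈ K | (volume (C y)).toReal = T} := by
    rw [hw]; rfl
  have h0K : (0 : EuclideanSpace ℝ (Fin d)) ∈ K := h0mem.1
  have hvol0 : 0 < volume (C 0) := by
    rcases eq_or_lt_of_le (zero_le : 0 ≤ volume (C 0)) with h | h
    · exfalso
      have := h0mem.2
      rw [← h] at this
      simp at this
      linarith
    · exact h
  -- C 0 is convex and symmetric
  have hC0conv : Convex ℝ (C 0) := by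
    rw [hC]
    intro z1 h1 z2 h2 a b ha hb hab
    simp only [Set.mem_setOf_eq, zero_add, zero_sub] at h1 h2 ⊢
    constructor
    · exact hKc h1.1 h2.1 ha hb hab
    · have h3 := hKc h1.2 h2.2 ha hb hab
      have heq : a • -z1 + b • -z2 = -(a • z1 + b • z2) := by module
      rwa [heq] at h3
  have hC0symm : C 0 = -(C 0) := by
    ext z
    rw [hC]
    simp only [Set.mem_neg, Set.mem_setOf_eq, zero_add, zero_sub, neg_neg, sub_neg_eq_add]
    tauto
  -- C 0 has nonempty interior
  have hC0int : (interior (C 0)).Nonempty := by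
    by_contra hcon
    rw [Set.not_nonempty_iff_eq_empty] at hcon
    have hspan : affineSpan ℝ (C 0) ≠ ⊤ := by
      intro htop
      rw [← hC0conv.interior_nonempty_iff_affineSpan_eq_top] at htop
      rw [hcon] at htop
      exact htop.ne_empty rfl
    have : volume (C 0) = 0 :=
      measure_mono_null (subset_affineSpan ℝ (C 0)) (Measure.addHaar_affineSubspace _ _ hspan)
    rw [this] at hvol0
    exact lt_irrefl _ hvol0
  obtain ⟨q, hq⟩ := hC0int
  have hnegq : -q ∈ interior (C 0) := by
    rw [hC0symm]
    have hpre : (-(C 0)) = (Homeomorph.neg (EuclideanSpace ℝ (Fin d))) ⁻¹' (C 0) := by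
      ext w; simp [Set.mem_neg]
    rw [hpre, ← Homeomorph.preimage_interior]
    simpa [Set.mem_preimage] using hq
  have h0int : (0 : EuclideanSpace ℝ (Fin d)) ∈ interior (C 0) := by
    have := hC0conv.interior hq hnegq (by norm_num : (0:ℝ) ≤ 1/2)
      (by norm_num : (0:ℝ) ≤ 1/2) (by norm_num)
    simpa using this
  have hsubK : C 0 ⊆ K := by
    intro z hz; rw [hC] at hz; simpa using hz.1
  exact interior_mono hsubK h0int


set_option maxHeartbeats 2000000 in
private lemma keyL {d : ℕ} (hd : 1 < d) (K : Set (EuclideanSpace ℝ (Fin d)))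
    (x : EuclideanSpace ℝ (Fin d))
    (g : EuclideanSpace ℝ (Fin d) ≃ᵃⁱ[ℝ] EuclideanSpace ℝ (Fin d)) (hgx : g x = 0)
    (proj : EuclideanSpace ℝ (Fin d) → EuclideanSpace ℝ (Fin (d - 1)))
    (hproj : ∀ z, proj z = (WithLp.equiv 2 (Fin (d - 1) → ℝ)).symm
      (fun i => z ⟨i, by omega⟩))
    (f : EuclideanSpace ℝ (Fin (d - 1)) → ℝ) (hf : ConvexOn ℝ Set.univ f)
    (hf0 : f 0 = 0) (hdf0 : SubgradAt f 0 0)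
    (A : EuclideanSpace ℝ (Fin (d - 1)) →L[ℝ] EuclideanSpace ℝ (Fin (d - 1)))
    (hA : HasGenSecondDerivAtZero f A)
    (hgraph : ∃ V ∈ nhds (0 : EuclideanSpace ℝ (Fin d)),
      (⇑g '' K) ∩ V = {z ∈ V | f (proj z) ≤ z ⟨d - 1, by omega⟩})
    (n : EuclideanSpace ℝ (Fin d)) (hn : ‖n‖ = 1)
    (hnormal : ∀ y ∈ K, (inner ℝ (y - x) n : ℝ) ≤ 0) :
    ∀ j : Fin d, g.linearIsometryEquiv n j = if (j : ℕ) = d - 1 then -1 else 0 := by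
  classical
  set L := g.linearIsometryEquiv with hL
  set n' := L n with hn'
  have hn'norm : ‖n'‖ = 1 := by rw [hn', L.norm_map, hn]
  -- support property in the g-coordinates
  have hsup : ∀ w ∈ ⇑g '' K, (inner ℝ w n' : ℝ) ≤ 0 := by
    rintro w ⟨y, hy, rfl⟩
    have h1 : L (y - x) = g y := by
      rw [← vsub_eq_sub, g.map_vsub, hgx, vsub_eq_sub, sub_zero]
    calc (inner ℝ (g y) n' : ℝ) = inner ℝ (L (y - x)) (L n) := by rw [h1, hn']
      _ = inner ℝ (y - x) n := L.inner_map_map _ _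
      _ ≤ 0 := hnormal y hy
  obtain ⟨V, hV, hgr⟩ := hgraph
  obtain ⟨ρV, hρV, hballV⟩ := Metric.mem_nhds_iff.1 hV
  set lastIdx : Fin d := ⟨d - 1, by omega⟩ with hlastIdx
  set e : EuclideanSpace ℝ (Fin d) := EuclideanSpace.single lastIdx 1 with he
  have henorm : ‖e‖ = 1 := by rw [he, EuclideanSpace.norm_single]; norm_num
  have hproj_coord : ∀ (z : EuclideanSpace ℝ (Fin d)) (i : Fin (d-1)),
      proj z i = z ⟨i, by omega⟩ := by
    intro z i; rw [hproj]; rfl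
  -- the last coordinate of n' is ≤ 0
  have hlast_le : n' lastIdx ≤ 0 := by
    have hz : ∀ ε : ℝ, 0 < ε → ε < ρV → (ε • e) ∈ ⇑g '' K := by
      intro ε hε hερ
      have hzV : ε • e ∈ V := by
        apply hballV
        rw [Metric.mem_ball, dist_zero_right, norm_smul, henorm]
        simp [abs_of_pos hε, hε, hερ]
      have hproj0 : proj (ε • e) = 0 := by
        apply PiLp.ext
        intro i
        rw [hproj_coord]
        have hne : (⟨(i : ℕ), by omega⟩ : Fin d) ≠ lastIdx := by
          rw [hlastIdx]
          intro hcon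
          have := Fin.mk.injEq (i : ℕ) _ (d-1) _ ▸ hcon
          omega
        simp only [PiLp.smul_apply, he, smul_eq_mul]
        rw [EuclideanSpace.single_apply]
        simp [hne]
      have : ε • e ∈ {z ∈ V | f (proj z) ≤ z lastIdx} := by
        refine ⟨hzV, ?_⟩
        rw [hproj0, hf0]
        simp only [PiLp.smul_apply, he, smul_eq_mul]
        rw [EuclideanSpace.single_apply]
        simp [hε.le]
      rw [← hgr] at this
      exact this.1
    have h2 : ∀ ε : ℝ, 0 < ε → ε < ρV → ε * n' lastIdx ≤ 0 := by
      intro ε hε hερ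
      have := hsup _ (hz ε hε hερ)
      rw [real_inner_smul_left] at this
      have h3 : (inner ℝ e n' : ℝ) = n' lastIdx := by
        rw [he, EuclideanSpace.inner_single_left]
        simp
      rw [h3] at this
      exact this
    by_contra hcon
    push_neg at hcon
    have := h2 (ρV/2) (by linarith) (by linarith)
    nlinarith
  -- f is nonnegative
  have hfnn : ∀ u, 0 ≤ f u := by
    intro u
    have := hdf0 u
    rw [hf0, inner_zero_left] at this
    linarith
  -- quadratic bound on f
  obtain ⟨ρ, hρ, Cb, hCb, hquad⟩ := f_quad_bound hf hf0 hA
  -- coordinate bound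
  have hcoordbd : ∀ j : Fin d, |n' j| ≤ 1 := by
    intro j
    have h1 : (inner ℝ (EuclideanSpace.single j (1:ℝ)) n' : ℝ) = n' j := by
      rw [EuclideanSpace.inner_single_left]; simp
    have h2 := abs_real_inner_le_norm (EuclideanSpace.single j (1:ℝ)) n'
    rw [h1, EuclideanSpace.norm_single, hn'norm] at h2
    simpa using h2
  -- the projection of n' vanishes
  obtain ⟨p, hp⟩ : ∃ p, p = proj n' := ⟨_, rfl⟩
  have hpcoord : ∀ i : Fin (d-1), p i = n' ⟨i, by omega⟩ := by
    intro i; rw [hp]; exact hproj_coord n' i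
  have hpzero : p = 0 := by
    by_contra hpne
    obtain ⟨B, hBdef⟩ : ∃ B : ℝ, B = ‖p‖ := ⟨_, rfl⟩
    have hB : 0 < B := by rw [hBdef]; exact norm_pos_iff.2 hpne
    obtain ⟨D, hD⟩ : ∃ D : ℝ, D = 1 + Cb * ρ := ⟨_, rfl⟩
    have hDpos : 0 < D := by rw [hD]; positivity
    obtain ⟨τ, hτdef⟩ : ∃ τ : ℝ, τ = min (min ρ (ρV / D) / (B + 1)) (1 / (Cb + 1)) / 2 :=
      ⟨_, rfl⟩
    have hmin1 : 0 < min ρ (ρV / D) := lt_min hρ (by positivity)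
    have hτpos : 0 < τ := by
      rw [hτdef]
      have h1 : 0 < min ρ (ρV / D) / (B + 1) := div_pos hmin1 (by linarith)
      have h2 : (0:ℝ) < 1 / (Cb + 1) := by positivity
      have := lt_min h1 h2
      linarith
    have hτB : τ * B < min ρ (ρV / D) := by
      have h1 : τ ≤ min ρ (ρV / D) / (B + 1) / 2 := by
        rw [hτdef]; gcongr; exact min_le_left _ _
      have h2 : τ * B ≤ min ρ (ρV / D) / (B + 1) / 2 * (B+1) := by
        apply mul_le_mul h1 (by linarith) hB.le (by positivity)
      have h3 : min ρ (ρV / D) / (B + 1) / 2 * (B+1) = min ρ (ρV / D) / 2 := by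
        field_simp
      nlinarith [hmin1]
    have hτCb : Cb * τ < 1 := by
      have h1 : τ ≤ 1 / (Cb + 1) / 2 := by
        rw [hτdef]; gcongr; exact min_le_right _ _
      have h2 : Cb * τ ≤ Cb * (1 / (Cb + 1) / 2) := by
        apply mul_le_mul_of_nonneg_left h1 hCb
      have h3 : Cb * (1 / (Cb + 1) / 2) < 1 := by
        rw [div_div]
        rw [mul_one_div]
        rw [div_lt_one (by positivity)]
        nlinarith
      linarith
    obtain ⟨u, hu⟩ : ∃ u : EuclideanSpace ℝ (Fin (d-1)), u = τ • p := ⟨_, rfl⟩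
    have hunorm : ‖u‖ = τ * B := by
      rw [hu, norm_smul, Real.norm_eq_abs, abs_of_pos hτpos, hBdef]
    have huρ : ‖u‖ < ρ := by rw [hunorm]; exact lt_of_lt_of_le hτB (min_le_left _ _)
    have hfub : f u ≤ Cb * ‖u‖^2 := hquad u huρ
    -- the test point z
    obtain ⟨z, hz⟩ : ∃ z : EuclideanSpace ℝ (Fin d), z = (WithLp.equiv 2 (Fin d → ℝ)).symm
      (fun j => if h : (j:ℕ) < d - 1 then u ⟨j, h⟩ else f u) := ⟨_, rfl⟩
    have hzcoord : ∀ j : Fin d, z j = if h : (j:ℕ) < d - 1 then u ⟨j, h⟩ else f u := by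
      intro j; rw [hz]; rfl
    have hzlast : z lastIdx = f u := by
      rw [hzcoord]
      simp [hlastIdx]
    have hprojz : proj z = u := by
      apply PiLp.ext
      intro i
      rw [hproj_coord, hzcoord]
      have hi : ((⟨(i:ℕ), by omega⟩ : Fin d) : ℕ) < d - 1 := i.isLt
      rw [dif_pos hi]
    -- norm of z
    have hsum_u : ∑ i : Fin (d-1), ‖u i‖^2 = ‖u‖^2 := by
      rw [EuclideanSpace.norm_eq, Real.sq_sqrt]
      positivity
    have hznorm : ‖z‖ ≤ ‖u‖ + f u := by
      rw [EuclideanSpace.norm_eq]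
      have hsplit : ∑ j, ‖z j‖^2 = (∑ i : Fin (d-1), ‖z ⟨i, by omega⟩‖^2)
          + ‖z ⟨d-1, by omega⟩‖^2 := sum_split hd _
      have h1 : ∀ i : Fin (d-1), ‖z ⟨(i:ℕ), by omega⟩‖^2 = ‖u i‖^2 := by
        intro i
        have hi : ((⟨(i:ℕ), by omega⟩ : Fin d) : ℕ) < d - 1 := i.isLt
        rw [hzcoord, dif_pos hi]
      have h2 : ‖z ⟨d-1, by omega⟩‖^2 = (f u)^2 := by
        have : z ⟨d-1, by omega⟩ = f u := hzlast
        rw [this, Real.norm_eq_abs, sq_abs]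
      rw [hsplit, h2]
      have h3 : ∑ i : Fin (d-1), ‖z ⟨(i:ℕ), by omega⟩‖^2 = ∑ i : Fin (d-1), ‖u i‖^2 :=
        Finset.sum_congr rfl (fun i _ => h1 i)
      rw [h3, hsum_u]
      have h4 : ‖u‖^2 + f u ^2 ≤ (‖u‖ + f u)^2 := by
        have := norm_nonneg u
        have := hfnn u
        nlinarith
      calc Real.sqrt (‖u‖^2 + f u ^ 2) ≤ Real.sqrt ((‖u‖ + f u)^2) := Real.sqrt_le_sqrt h4
        _ = ‖u‖ + f u := by
            rw [Real.sqrt_sq (by have := norm_nonneg u; have := hfnn u; linarith)]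
    have hzV : z ∈ V := by
      apply hballV
      rw [Metric.mem_ball, dist_zero_right]
      have h5 : ‖u‖ + f u ≤ ‖u‖ * D := by
        rw [hD]
        have : f u ≤ Cb * ‖u‖^2 := hfub
        have h6 : Cb * ‖u‖^2 ≤ Cb * (ρ * ‖u‖) := by
          nlinarith [mul_nonneg (mul_nonneg hCb (norm_nonneg u)) (sub_nonneg.2 huρ.le)]
        nlinarith [norm_nonneg u]
      have h7 : ‖u‖ * D < ρV := by
        rw [hunorm]
        have h8 : τ * B < ρV / D := lt_of_lt_of_le hτB (min_le_right _ _)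
        calc τ * B * D < (ρV / D) * D := by
              apply mul_lt_mul_of_pos_right h8 hDpos
          _ = ρV := by field_simp
      linarith [hznorm]
    have hzK : z ∈ ⇑g '' K := by
      have hzl2 : z ⟨d-1, by omega⟩ = f u := by rw [hzcoord]; simp
      have hmem : z ∈ {w ∈ V | f (proj w) ≤ w ⟨d-1, by omega⟩} :=
        ⟨hzV, le_of_eq (by rw [hprojz, hzl2])⟩
      rw [← hgr] at hmem
      exact hmem.1
    have hzn' := hsup z hzK
    -- expand the inner ℝ product
    have hinner_expand : (inner ℝ z n' : ℝ) = τ * B^2 + f u * n' lastIdx := by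
      have h1 : (inner ℝ z n' : ℝ) = ∑ j, z j * n' j := by
        simp [PiLp.inner_apply, RCLike.inner_apply', conj_trivial, mul_comm]
      rw [h1, sum_split hd]
      have h2 : ∀ i : Fin (d-1), z ⟨(i:ℕ), by omega⟩ * n' ⟨(i:ℕ), by omega⟩
          = u i * p i := by
        intro i
        have hi : ((⟨(i:ℕ), by omega⟩ : Fin d) : ℕ) < d - 1 := i.isLt
        rw [hzcoord, dif_pos hi, hpcoord]
      have h3 : ∑ i : Fin (d-1), z ⟨(i:ℕ), by omega⟩ * n' ⟨(i:ℕ), by omega⟩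
          = ∑ i : Fin (d-1), u i * p i := Finset.sum_congr rfl (fun i _ => h2 i)
      have h4 : ∑ i : Fin (d-1), u i * p i = τ * B^2 := by
        have h5 : (inner ℝ u p : ℝ) = ∑ i, u i * p i := by
          simp [PiLp.inner_apply, RCLike.inner_apply', conj_trivial, mul_comm]
        rw [← h5, hu, real_inner_smul_left, real_inner_self_eq_norm_sq, ← hBdef]
      have h6 : z ⟨d-1, by omega⟩ = f u := hzlast
      rw [h3, h4, h6]
    -- conclude the contradiction
    have hfinal : τ * B^2 ≤ f u := by
      have hbd : -1 ≤ n' lastIdx := by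
        have := hcoordbd lastIdx
        rw [abs_le] at this
        exact this.1
      have h8 : f u * n' lastIdx ≥ f u * (-1) := by
        apply mul_le_mul_of_nonneg_left hbd (hfnn u)
      rw [hinner_expand] at hzn'
      nlinarith
    have h9 : f u ≤ Cb * (τ * B)^2 := by rw [← hunorm]; exact hfub
    have hq1 : 0 < τ * B^2 := mul_pos hτpos (pow_pos hB 2)
    have hq2 : τ * B^2 * (1 - Cb * τ) ≤ 0 := by nlinarith [hfinal, h9]
    have hq3 : 0 < 1 - Cb * τ := by linarith
    nlinarith [mul_pos hq1 hq3]
  -- now derive the coordinates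
  intro j
  by_cases hj : (j : ℕ) = d - 1
  · rw [if_pos hj]
    have hjeq : j = lastIdx := by
      rw [hlastIdx]; exact Fin.ext hj
    rw [hjeq]
    -- norm computation: 1 = ∑ n'ᵢ² = (n' lastIdx)²
    have h1 : (1:ℝ) = ∑ i, n' i * n' i := by
      have h2 : (inner ℝ n' n' : ℝ) = ∑ i, n' i * n' i := by
        simp only [PiLp.inner_apply, RCLike.inner_apply', conj_trivial]
      rw [← h2, real_inner_self_eq_norm_sq, hn'norm, one_pow]
    rw [sum_split hd] at h1
    have h3 : ∀ i : Fin (d-1), n' ⟨(i:ℕ), by omega⟩ * n' ⟨(i:ℕ), by omega⟩ = 0 := by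
      intro i
      rw [← hpcoord, hpzero]
      simp
    have h4 : ∑ i : Fin (d-1), n' ⟨(i:ℕ), by omega⟩ * n' ⟨(i:ℕ), by omega⟩ = 0 :=
      Finset.sum_eq_zero (fun i _ => h3 i)
    rw [h4, zero_add] at h1
    have h5 : n' lastIdx = n' ⟨d-1, by omega⟩ := rfl
    have h6 : n' lastIdx ^ 2 = 1 := by rw [h5]; nlinarith [h1]
    have h7 := hlast_le
    nlinarith
  · rw [if_neg hj]
    have hjlt : (j : ℕ) < d - 1 := by omega
    have := hpcoord ⟨(j:ℕ), hjlt⟩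
    rw [hpzero] at this
    have h8 : (⟨((⟨(j:ℕ), hjlt⟩ : Fin (d-1)) : ℕ), by omega⟩ : Fin d) = j := Fin.ext rfl
    rw [h8] at this
    rw [← this]
    simp

set_option maxHeartbeats 2000000 in
/-- Lemma 18 (i): let `K ⊂ ℝ^d` be a convex body, `x ∈ ∂K` a point where `∂K` is twice
differentiable in the generalized sense. With `K_T` at the origin and `x_t` the point of
`∂K_t` on `[0,x]`, one has `lim_{t→0⁺} ⟨x, N(x)⟩ / ⟨x_t, N(x_t)⟩ = 1`. -/
theorem stmt_13 (d : ℕ) (hd : 2 ≤ d) (K : Set (EuclideanSpace ℝ (Fin d)))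
    (hK : IsCompact K) (hKc : Convex ℝ K) (hKi : (interior K).Nonempty)
    (C : EuclideanSpace ℝ (Fin d) → Set (EuclideanSpace ℝ (Fin d)))
    (hC : ∀ y, C y = {z : EuclideanSpace ℝ (Fin d) | y + z ∈ K ∧ y - z ∈ K})
    (T : ℝ) (hT : IsGreatest ((fun y => (volume (C y)).toReal) '' K) T)
    (Kt : ℝ → Set (EuclideanSpace ℝ (Fin d)))
    (hKt : ∀ t, Kt t = {y ∈ K | ENNReal.ofReal t ≤ volume (C y)})
    -- the point `K_T` is the origin
    (hw : {y ∈ K | (volume (C y)).toReal = T} = {0})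
    (x : EuclideanSpace ℝ (Fin d)) (hx : x ∈ frontier K)
    -- `∂K` is twice differentiable in the generalized sense at `x`: after a rigid motion
    -- `g` moving `x` to `0`, `K` is locally the epigraph of a convex function `f` with a
    -- generalized second differential `A` at `0`
    (g : EuclideanSpace ℝ (Fin d) ≃ᵃⁱ[ℝ] EuclideanSpace ℝ (Fin d)) (hgx : g x = 0)
    (proj : EuclideanSpace ℝ (Fin d) → EuclideanSpace ℝ (Fin (d - 1)))
    (hproj : ∀ z, proj z = (WithLp.equiv 2 (Fin (d - 1) → ℝ)).symm
      (fun i => z ⟨i, by omega⟩))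
    (f : EuclideanSpace ℝ (Fin (d - 1)) → ℝ) (hf : ConvexOn ℝ Set.univ f)
    (hf0 : f 0 = 0) (hdf0 : SubgradAt f 0 0)
    (A : EuclideanSpace ℝ (Fin (d - 1)) →L[ℝ] EuclideanSpace ℝ (Fin (d - 1)))
    (hA : HasGenSecondDerivAtZero f A)
    (hgraph : ∃ V ∈ nhds (0 : EuclideanSpace ℝ (Fin d)),
      (⇑g '' K) ∩ V = {z ∈ V | f (proj z) ≤ z ⟨d - 1, by omega⟩})
    -- `N(x)` is the outer unit normal to `K` at `x`
    (Nx : EuclideanSpace ℝ (Fin d)) (hNx : ‖Nx‖ = 1)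
    (hNx' : ∀ y ∈ K, (inner ℝ (y - x) Nx : ℝ) ≤ 0)
    -- `x_t` is the unique point of `∂K_t` on `[0,x]`, with outer unit normal `N t`
    (xt : ℝ → EuclideanSpace ℝ (Fin d))
    (hxt : ∀ t ∈ Set.Icc (0 : ℝ) T, xt t ∈ frontier (Kt t) ∩ segment ℝ 0 x)
    (N : ℝ → EuclideanSpace ℝ (Fin d))
    (hN : ∀ t ∈ Set.Icc (0 : ℝ) T,
      ‖N t‖ = 1 ∧ ∀ y ∈ Kt t, (inner ℝ (y - xt t) (N t) : ℝ) ≤ 0) :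
    Filter.Tendsto
      (fun t : ℝ => (inner ℝ x Nx : ℝ) / (inner ℝ (xt t) (N t) : ℝ))
      (nhdsWithin 0 (Set.Ioi 0)) (nhds 1) := by
  classical
  obtain ⟨hT0, h0int⟩ := origin_int hd K hK hKc hKi C hC T hT hw
  -- basic geometric facts
  have hxK : x ∈ K := by
    have h1 : x ∈ closure K := frontier_subset_closure hx
    rwa [hK.isClosed.closure_eq] at h1
  have hCball : ∀ (y : EuclideanSpace ℝ (Fin d)) (ε : ℝ), Metric.ball y ε ⊆ K →
      Metric.ball (0 : EuclideanSpace ℝ (Fin d)) ε ⊆ C y := by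
    intro y ε hb z hz
    rw [hC]
    simp only [Metric.mem_ball, dist_zero_right] at hz
    constructor
    · apply hb; rw [Metric.mem_ball, dist_eq_norm]; simpa using hz
    · apply hb; rw [Metric.mem_ball, dist_eq_norm]; simpa [norm_sub_rev] using hz
  -- membership criterion for K_t
  have hQ : ∀ (ε : ℝ), 0 < ε → ∀ y' : EuclideanSpace ℝ (Fin d), Metric.ball y' ε ⊆ K →
      ∀ t : ℝ, ENNReal.ofReal t ≤ volume (Metric.ball (0 : EuclideanSpace ℝ (Fin d)) ε) →
      y' ∈ Kt t := by
    intro ε hε y' hb t ht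
    rw [hKt]
    refine ⟨hb (Metric.mem_ball_self hε), ?_⟩
    exact le_trans ht (measure_mono (hCball y' ε hb))
  -- positive inner ℝ product at x
  obtain ⟨r, hr, hbr⟩ := Metric.isOpen_iff.1 isOpen_interior 0 h0int
  have hbrK : Metric.ball (0 : EuclideanSpace ℝ (Fin d)) r ⊆ K := hbr.trans interior_subset
  have hc : 0 < (inner ℝ x Nx : ℝ) := by
    have hy : (r/2) • Nx ∈ K := by
      apply hbrK
      rw [Metric.mem_ball, dist_zero_right, norm_smul, Real.norm_eq_abs, hNx,
        abs_of_pos (by linarith)]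
      linarith
    have h1 := hNx' _ hy
    rw [inner_sub_left, real_inner_smul_left, real_inner_self_eq_norm_sq, hNx] at h1
    nlinarith
  -- xt tends to x
  have htends : Filter.Tendsto xt (nhdsWithin 0 (Set.Ioi 0)) (nhds x) := by
    rw [Metric.tendsto_nhds]
    intro ε' hε'
    obtain ⟨s, hs0, hs1, hsx⟩ : ∃ s : ℝ, 0 < s ∧ s < 1 ∧ (1 - s) * ‖x‖ < ε' := by
      refine ⟨1 - min 1 (ε' / (‖x‖ + 1)) / 2, by
        have := min_le_left 1 (ε' / (‖x‖ + 1)); linarith, by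
        have h2 : 0 < min 1 (ε' / (‖x‖ + 1)) := lt_min one_pos (by positivity)
        linarith, ?_⟩
      have h3 : min 1 (ε' / (‖x‖ + 1)) ≤ ε' / (‖x‖ + 1) := min_le_right _ _
      have h4 : (0:ℝ) < ‖x‖ + 1 := by positivity
      have h5 : (1 - (1 - min 1 (ε' / (‖x‖ + 1)) / 2)) = min 1 (ε' / (‖x‖ + 1)) / 2 := by ring
      rw [h5]
      have h6 : ε' / (‖x‖ + 1) * (‖x‖ + 1) = ε' := by field_simp
      nlinarith [norm_nonneg x, lt_min one_pos (show (0:ℝ) < ε' / (‖x‖ + 1) by positivity)]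
    -- the compact segment L
    have hLcomp : IsCompact (segment ℝ (0 : EuclideanSpace ℝ (Fin d)) (s • x)) := by
      rw [segment_eq_image]
      exact (isCompact_Icc).image (by continuity)
    have hLint : segment ℝ (0 : EuclideanSpace ℝ (Fin d)) (s • x) ⊆ interior K := by
      intro z hz
      rw [segment_eq_image] at hz
      obtain ⟨θ, hθ, hzeq⟩ := hz
      have hzeq' : z = (θ * s) • x := by
        rw [← hzeq]; simp [smul_smul]
      have h1 : θ * s ≤ s := by nlinarith [hθ.1, hθ.2, hs0]
      have h2 : 0 ≤ θ * s := by nlinarith [hθ.1, hs0]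
      have h3 := hKc.combo_interior_closure_mem_interior h0int (subset_closure hxK)
        (show 0 < 1 - θ * s by linarith) h2 (by ring)
      rw [smul_zero, zero_add] at h3
      rwa [hzeq']
    obtain ⟨δ, hδ, hthick⟩ := hLcomp.exists_thickening_subset_open isOpen_interior hLint
    set m := (volume (Metric.ball (0 : EuclideanSpace ℝ (Fin d)) (δ/2))).toReal with hm
    have hmpos : 0 < m := by
      rw [hm]
      apply ENNReal.toReal_pos
      · exact (Metric.measure_ball_pos volume _ (by linarith)).ne'
      · exact (measure_ball_lt_top).ne
    have hev : Set.Ioo (0:ℝ) (min T m) ∈ nhdsWithin (0:ℝ) (Set.Ioi 0) :=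
      Ioo_mem_nhdsGT_of_mem ⟨le_refl 0, lt_min hT0 hmpos⟩
    filter_upwards [hev] with t ht
    obtain ⟨ht0, htm⟩ := ht
    have htT : t ≤ T := le_of_lt (lt_of_lt_of_le htm (min_le_left _ _))
    obtain ⟨hfr, hseg⟩ := hxt t ⟨ht0.le, htT⟩
    rw [segment_eq_image] at hseg
    obtain ⟨σ, hσ, hσeq⟩ := hseg
    have hσeq' : xt t = σ • x := by rw [← hσeq]; simp
    -- σ > s
    have hσs : s < σ := by
      by_contra hcon
      push_neg at hcon
      -- xt t lies in the inner ℝ segment L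
      have hxtL : xt t ∈ segment ℝ (0 : EuclideanSpace ℝ (Fin d)) (s • x) := by
        rw [segment_eq_image]
        refine ⟨σ / s, ⟨div_nonneg hσ.1 hs0.le, by rw [div_le_one hs0]; exact hcon⟩, ?_⟩
        simp only [smul_zero, zero_add, smul_smul]
        rw [div_mul_cancel₀ _ (ne_of_gt hs0), hσeq']
      -- then xt t is in the interior of Kt t
      have hxtint : xt t ∈ interior (Kt t) := by
        rw [mem_interior]
        refine ⟨Metric.ball (xt t) (δ/2), ?_, Metric.isOpen_ball, Metric.mem_ball_self
          (by linarith)⟩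
        intro y' hy'
        apply hQ (δ/2) (by linarith) y' ?_ t
        · exact ENNReal.ofReal_le_of_le_toReal (le_of_lt (lt_of_lt_of_le htm
            (min_le_right _ _)))
        · intro w hw
          rw [Metric.mem_ball] at hw hy'
          have hwL : w ∈ Metric.thickening δ (segment ℝ (0 : EuclideanSpace ℝ (Fin d))
              (s • x)) := by
            rw [Metric.mem_thickening_iff]
            exact ⟨xt t, hxtL, by
              calc dist w (xt t) ≤ dist w y' + dist y' (xt t) := dist_triangle _ _ _
                _ < δ/2 + δ/2 := add_lt_add hw hy'
                _ = δ := by ring⟩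
          exact interior_subset (hthick hwL)
      exact hfr.2 hxtint
    -- distance bound
    rw [hσeq', dist_eq_norm]
    have h7 : σ • x - x = (σ - 1) • x := by
      rw [sub_smul, one_smul]
    rw [h7, norm_smul, Real.norm_eq_abs, abs_of_nonpos (by linarith [hσ.2])]
    have h8 : -(σ - 1) * ‖x‖ ≤ (1 - s) * ‖x‖ := by
      nlinarith [norm_nonneg x, hσ.2]
    linarith
  -- now the ultrafilter argument
  rw [Filter.tendsto_iff_ultrafilter]
  intro U hU
  -- N t is eventually on the unit sphere
  have hevT : Set.Ioc (0:ℝ) T ∈ nhdsWithin (0:ℝ) (Set.Ioi 0) :=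
    Ioc_mem_nhdsGT_of_mem ⟨le_refl 0, hT0⟩
  have hsphereF : ∀ᶠ t in nhdsWithin (0:ℝ) (Set.Ioi 0),
      N t ∈ Metric.sphere (0 : EuclideanSpace ℝ (Fin d)) 1 := by
    filter_upwards [hevT] with t ht
    rw [Metric.mem_sphere, dist_zero_right]
    exact (hN t ⟨ht.1.le, ht.2⟩).1
  have hUs : ↑(U.map N) ≤ Filter.principal (Metric.sphere (0 : EuclideanSpace ℝ (Fin d)) 1) := by
    rw [Ultrafilter.coe_map, Filter.le_principal_iff, Filter.mem_map]
    exact hU hsphereF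
  obtain ⟨n₀, hn₀s, hn₀le⟩ := (isCompact_sphere (0 : EuclideanSpace ℝ (Fin d)) 1).ultrafilter_le_nhds
    (U.map N) hUs
  have hn₀ : Filter.Tendsto N ↑U (nhds n₀) := by
    have h := hn₀le
    rw [Ultrafilter.coe_map] at h
    exact h
  have hn₀norm : ‖n₀‖ = 1 := by
    rw [Metric.mem_sphere, dist_zero_right] at hn₀s; exact hn₀s
  have hxtU : Filter.Tendsto xt ↑U (nhds x) := htends.mono_left hU
  -- n₀ is an outer normal at x
  have hn₀normal : ∀ y ∈ K, (inner ℝ (y - x) n₀ : ℝ) ≤ 0 := by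
    have hint : ∀ y ∈ interior K, (inner ℝ (y - x) n₀ : ℝ) ≤ 0 := by
      intro y hy
      obtain ⟨εy, hεy, hby⟩ := Metric.isOpen_iff.1 isOpen_interior y hy
      have hbyK : Metric.ball y εy ⊆ K := hby.trans interior_subset
      set my := (volume (Metric.ball (0 : EuclideanSpace ℝ (Fin d)) εy)).toReal with hmy
      have hmypos : 0 < my := by
        rw [hmy]
        apply ENNReal.toReal_pos
        · exact (Metric.measure_ball_pos volume _ hεy).ne'
        · exact (measure_ball_lt_top).ne
      have hevy : Set.Ioo (0:ℝ) (min T my) ∈ nhdsWithin (0:ℝ) (Set.Ioi 0) :=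
        Ioo_mem_nhdsGT_of_mem ⟨le_refl 0, lt_min hT0 hmypos⟩
      have hFineq : ∀ᶠ t in nhdsWithin (0:ℝ) (Set.Ioi 0),
          (inner ℝ (y - xt t) (N t) : ℝ) ≤ 0 := by
        filter_upwards [hevy] with t ht
        have htT : t ≤ T := le_of_lt (lt_of_lt_of_le ht.2 (min_le_left _ _))
        apply (hN t ⟨ht.1.le, htT⟩).2
        apply hQ εy hεy y hbyK t
        exact ENNReal.ofReal_le_of_le_toReal (le_of_lt (lt_of_lt_of_le ht.2
          (min_le_right _ _)))
      have hTube : Filter.Tendsto (fun t => (inner ℝ (y - xt t) (N t) : ℝ)) ↑U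
          (nhds (inner ℝ (y - x) n₀ : ℝ)) :=
        Filter.Tendsto.inner (Filter.Tendsto.sub tendsto_const_nhds hxtU) hn₀
      exact le_of_tendsto hTube (hU hFineq)
    intro y hy
    -- approximate y from the interior
    have hseq : Filter.Tendsto (fun k : ℕ => (1 - 1/(k+1) : ℝ) • y) Filter.atTop (nhds y) := by
      have h1 : Filter.Tendsto (fun k : ℕ => (1 - 1/(k+1) : ℝ)) Filter.atTop (nhds 1) := by
        have : Filter.Tendsto (fun n : ℕ => 1 / ((n : ℝ) + 1)) Filter.atTop (nhds 0) :=
          tendsto_one_div_add_atTop_nhds_zero_nat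
        have h2 := Filter.Tendsto.sub (tendsto_const_nhds (x := (1:ℝ))) this
        simpa using h2
      have h3 := Filter.Tendsto.smul_const h1 y
      rwa [one_smul] at h3
    have hmem : ∀ k : ℕ, ((1 - 1/(k+1) : ℝ) • y) ∈ interior K := by
      intro k
      have hk1 : (0:ℝ) < 1/(k+1) := by positivity
      have hk2 : 1/((k:ℝ)+1) ≤ 1 := by
        rw [div_le_one (by positivity)]
        linarith [Nat.cast_nonneg (α := ℝ) k]
      have h3 := hKc.combo_interior_closure_mem_interior h0int (subset_closure hy)
        hk1 (show (0:ℝ) ≤ 1 - 1/(k+1) by linarith) (by ring)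
      rwa [smul_zero, zero_add] at h3
    have hTube2 : Filter.Tendsto (fun k : ℕ => (inner ℝ ((1 - 1/(k+1) : ℝ) • y - x) n₀ : ℝ))
        Filter.atTop (nhds (inner ℝ (y - x) n₀ : ℝ)) :=
      Filter.Tendsto.inner (Filter.Tendsto.sub hseq tendsto_const_nhds) tendsto_const_nhds
    exact le_of_tendsto hTube2 (Filter.Eventually.of_forall
      (fun k => hint _ (hmem k)))
  -- uniqueness of the outer normal
  have hn₀Nx : n₀ = Nx := by
    have h1 := keyL hd K x g hgx proj hproj f hf hf0 hdf0 A hA hgraph n₀ hn₀norm hn₀normal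
    have h2 := keyL hd K x g hgx proj hproj f hf hf0 hdf0 A hA hgraph Nx hNx hNx'
    have h3 : g.linearIsometryEquiv n₀ = g.linearIsometryEquiv Nx :=
      PiLp.ext (fun j => by rw [h1 j, h2 j])
    exact g.linearIsometryEquiv.injective h3
  -- conclude
  have hinner : Filter.Tendsto (fun t => (inner ℝ (xt t) (N t) : ℝ)) ↑U
      (nhds (inner ℝ x Nx : ℝ)) := by
    rw [← hn₀Nx]
    exact Filter.Tendsto.inner hxtU hn₀
  have hfinal := Filter.Tendsto.div (tendsto_const_nhds (x := (inner ℝ x Nx : ℝ)))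
    hinner (ne_of_gt hc)
  rwa [div_self (ne_of_gt hc)] at hfinal
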